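/- Let μ ∈ (0, 1], r > 0, and let (φ_k)_{k≥0} be the real sequence defined by φ_0 ∈ (0, π/2) and the recursion φ_{k+1} = arctan(μ·tan(φ_k/2)). Then the sequence (r·sec(φ_k))_{k≥0} converges to r Q-linearly with rate μ²/4, i.e., lim_{k→∞} (r·sec(φ_{k+1}) − r)/(r·sec(φ_k) − r) = μ²/4. -/

import Mathlib

open Real Filter Set

private lemma slope_tendsto (f : ℝ → ℝ) (hf : HasDerivAt f 1 0) (hf0 : f 0 = 0) :
    Tendsto (fun y => f y / y) (nhdsWithin 0 {(0:ℝ)}ᶜ) (nhds 1) := by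
  have h := hasDerivAt_iff_tendsto_slope.mp hf
  refine h.congr' ?_
  filter_upwards [self_mem_nhdsWithin] with y hy
  simp [slope, hf0, div_eq_inv_mul]

private lemma tendsto_sin_div :
    Tendsto (fun y => Real.sin y / y) (nhdsWithin 0 {(0:ℝ)}ᶜ) (nhds 1) := by
  have := slope_tendsto Real.sin (by simpa using Real.hasDerivAt_sin 0) Real.sin_zero
  exact this

private lemma tendsto_tan_div :
    Tendsto (fun y => Real.tan y / y) (nhdsWithin 0 {(0:ℝ)}ᶜ) (nhds 1) := by
  refine slope_tendsto Real.tan ?_ Real.tan_zero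
  have := Real.hasDerivAt_tan (x := 0) (by simp)
  simpa using this

private lemma tendsto_arctan_div :
    Tendsto (fun y => Real.arctan y / y) (nhdsWithin 0 {(0:ℝ)}ᶜ) (nhds 1) := by
  refine slope_tendsto Real.arctan ?_ Real.arctan_zero
  have := Real.hasDerivAt_arctan 0
  simpa using this

/-- Theorem 4.7. For the angles `φ_{k+1} = arctan(μ·tan(φ_k/2))` of
Uhlig's cutting procedure with `φ_0 ∈ (0, π/2)`, the corner moduli `r·sec(φ_k)` converge
to `r` Q-linearly with rate `μ²/4`. -/
theorem uhlig_corner_convergence (μ r : ℝ) (hμ1 : 0 < μ) (hμ2 : μ ≤ 1) (hr : 0 < r)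
    (φ : ℕ → ℝ) (h0 : 0 < φ 0) (h0' : φ 0 < Real.pi / 2)
    (hrec : ∀ k, φ (k + 1) = Real.arctan (μ * Real.tan (φ k / 2))) :
    Filter.Tendsto (fun k => r * (1 / Real.cos (φ k))) Filter.atTop (nhds r) ∧
    Filter.Tendsto
      (fun k => (r * (1 / Real.cos (φ (k + 1))) - r) / (r * (1 / Real.cos (φ k)) - r))
      Filter.atTop (nhds (μ ^ 2 / 4)) := by
  -- basic invariant
  have hmem : ∀ k, φ k ∈ Ioo 0 (π / 2) := by
    intro k
    induction k with
    | zero => exact ⟨h0, h0'⟩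
    | succ n ih =>
      rw [hrec n]
      constructor
      · rw [show (0:ℝ) = Real.arctan 0 by simp]
        apply Real.arctan_strictMono
        have ht : 0 < Real.tan (φ n / 2) :=
          Real.tan_pos_of_pos_of_lt_pi_div_two (by linarith [ih.1]) (by linarith [ih.2, Real.pi_pos])
        positivity
      · exact Real.arctan_lt_pi_div_two _
  -- halving bound
  have hhalf : ∀ k, φ (k + 1) ≤ φ k / 2 := by
    intro k
    rw [hrec k]
    have h1 : φ k / 2 < π / 2 := by linarith [(hmem k).2, Real.pi_pos]
    have h2 : -(π/2) < φ k / 2 := by linarith [(hmem k).1, Real.pi_pos]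
    have ht : 0 < Real.tan (φ k / 2) :=
      Real.tan_pos_of_pos_of_lt_pi_div_two (by linarith [(hmem k).1]) h1
    calc Real.arctan (μ * Real.tan (φ k / 2)) ≤ Real.arctan (Real.tan (φ k / 2)) := by
          apply Real.arctan_strictMono.monotone
          nlinarith
      _ = φ k / 2 := Real.arctan_tan h2 h1
  -- geometric bound and convergence to 0
  have hgeo : ∀ k, φ k ≤ φ 0 * (1/2)^k := by
    intro k
    induction k with
    | zero => simp
    | succ n ih =>
      calc φ (n+1) ≤ φ n / 2 := hhalf n
        _ ≤ (φ 0 * (1/2)^n) / 2 := by linarith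
        _ = φ 0 * (1/2)^(n+1) := by ring
  have hφ0 : Tendsto φ atTop (nhds 0) := by
    have hub : Tendsto (fun k => φ 0 * (1/2:ℝ)^k) atTop (nhds 0) := by
      have := tendsto_pow_atTop_nhds_zero_of_lt_one (by norm_num : (0:ℝ) ≤ 1/2) (by norm_num)
      simpa using this.const_mul (φ 0)
    exact tendsto_of_tendsto_of_tendsto_of_le_of_le tendsto_const_nhds hub
      (fun k => (hmem k).1.le) hgeo
  have hφin : Tendsto φ atTop (nhdsWithin 0 (Ioo 0 (π/2))) :=
    tendsto_nhdsWithin_of_tendsto_nhds_of_eventually_within φ hφ0 (Eventually.of_forall hmem)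
  -- cos φ k → 1
  have hcos : Tendsto (fun k => Real.cos (φ k)) atTop (nhds 1) := by
    have := (Real.continuous_cos.tendsto 0).comp hφ0
    simpa [Function.comp_def] using this
  have hsec : Tendsto (fun k => 1 / Real.cos (φ k)) atTop (nhds 1) := by
    have := hcos.inv₀ one_ne_zero
    simpa [one_div] using this
  have hfirst : Tendsto (fun k => r * (1 / Real.cos (φ k))) atTop (nhds r) := by
    have := hsec.const_mul r
    simpa using this
  refine ⟨hfirst, ?_⟩
  -- auxiliary functions
  set G : ℝ → ℝ := fun x => (1 / Real.cos x - 1) / x ^ 2 with hG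
  set Q : ℝ → ℝ := fun x => Real.arctan (μ * Real.tan (x / 2)) / x with hQ
  -- limit of G along nhdsWithin
  have hGlim : Tendsto G (nhdsWithin 0 (Ioo 0 (π/2))) (nhds (1/2)) := by
    have hsub : nhdsWithin (0:ℝ) (Ioo 0 (π/2)) ≤ nhdsWithin 0 {(0:ℝ)}ᶜ :=
      nhdsWithin_mono 0 (fun x hx => ne_of_gt hx.1)
    have h2 : Tendsto (fun x : ℝ => x / 2) (nhdsWithin 0 (Ioo 0 (π/2)))
        (nhdsWithin 0 {(0:ℝ)}ᶜ) := by
      apply tendsto_nhdsWithin_of_tendsto_nhds_of_eventually_within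
      · have : Tendsto (fun x : ℝ => x / 2) (nhds 0) (nhds 0) := by
          simpa using (tendsto_id (x := nhds (0:ℝ))).div_const 2
        exact this.mono_left nhdsWithin_le_nhds
      · filter_upwards [self_mem_nhdsWithin] with x hx
        exact ne_of_gt (by linarith [hx.1])
    have hsin2 : Tendsto (fun x : ℝ => Real.sin (x/2) / (x/2))
        (nhdsWithin 0 (Ioo 0 (π/2))) (nhds 1) := tendsto_sin_div.comp h2
    have hcosx : Tendsto (fun x : ℝ => 1 / Real.cos x)
        (nhdsWithin 0 (Ioo 0 (π/2))) (nhds 1) := by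
      have hc : Tendsto (fun x : ℝ => Real.cos x) (nhdsWithin 0 (Ioo 0 (π/2))) (nhds 1) := by
        have := (Real.continuous_cos.tendsto 0).mono_left
          (nhdsWithin_le_nhds (s := Ioo (0:ℝ) (π/2)))
        simpa using this
      simpa [one_div] using (hc.inv₀ one_ne_zero)
    have hmain : Tendsto (fun x : ℝ => (1/2) * (Real.sin (x/2) / (x/2))^2 * (1 / Real.cos x))
        (nhdsWithin 0 (Ioo 0 (π/2))) (nhds (1/2)) := by
      have := ((hsin2.pow 2).const_mul (1/2:ℝ)).mul hcosx
      simpa using this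
    refine hmain.congr' ?_
    filter_upwards [self_mem_nhdsWithin] with x hx
    have hx0 : x ≠ 0 := ne_of_gt hx.1
    have hcospos : 0 < Real.cos x :=
      Real.cos_pos_of_mem_Ioo ⟨by linarith [hx.1, Real.pi_pos], hx.2⟩
    have hid : Real.cos x = 1 - 2 * Real.sin (x/2)^2 := by
      have := Real.cos_two_mul (x/2)
      have h2 : Real.cos (2 * (x/2)) = Real.cos x := by ring_nf
      have hpy := Real.sin_sq_add_cos_sq (x/2)
      nlinarith [this, h2]
    have hne : (1:ℝ) - 2 * Real.sin (x/2)^2 ≠ 0 := by rw [← hid]; exact hcospos.ne'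
    simp only [hG]
    rw [hid]
    field_simp
    ring
  -- limit of Q
  have hQlim : Tendsto Q (nhdsWithin 0 (Ioo 0 (π/2))) (nhds (μ/2)) := by
    have h2 : Tendsto (fun x : ℝ => x / 2) (nhdsWithin 0 (Ioo 0 (π/2)))
        (nhdsWithin 0 {(0:ℝ)}ᶜ) := by
      apply tendsto_nhdsWithin_of_tendsto_nhds_of_eventually_within
      · have : Tendsto (fun x : ℝ => x / 2) (nhds 0) (nhds 0) := by
          simpa using (tendsto_id (x := nhds (0:ℝ))).div_const 2
        exact this.mono_left nhdsWithin_le_nhds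
      · filter_upwards [self_mem_nhdsWithin] with x hx
        exact ne_of_gt (by linarith [hx.1])
    have htan2 : Tendsto (fun x : ℝ => Real.tan (x/2) / (x/2))
        (nhdsWithin 0 (Ioo 0 (π/2))) (nhds 1) := tendsto_tan_div.comp h2
    -- μ * tan(x/2) tends to 0 within ≠ 0
    have htanpos : ∀ x ∈ Ioo (0:ℝ) (π/2), 0 < Real.tan (x/2) := by
      intro x hx
      exact Real.tan_pos_of_pos_of_lt_pi_div_two (by linarith [hx.1])
        (by linarith [hx.2, Real.pi_pos])
    have hmt : Tendsto (fun x : ℝ => μ * Real.tan (x/2)) (nhdsWithin 0 (Ioo 0 (π/2)))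
        (nhdsWithin 0 {(0:ℝ)}ᶜ) := by
      apply tendsto_nhdsWithin_of_tendsto_nhds_of_eventually_within
      · have hc : Tendsto (fun x : ℝ => Real.tan (x/2)) (nhds 0) (nhds 0) := by
          have h1 : Tendsto (fun x : ℝ => x/2) (nhds (0:ℝ)) (nhds 0) := by
            simpa using (tendsto_id (x := nhds (0:ℝ))).div_const 2
          have h2 : Tendsto Real.tan (nhds (0:ℝ)) (nhds 0) := by
            have : ContinuousAt Real.tan (0:ℝ) := Real.continuousAt_tan.mpr (by norm_num)
            simpa using this.tendsto
          exact h2.comp h1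
        have := (hc.const_mul μ).mono_left (nhdsWithin_le_nhds (s := Ioo (0:ℝ) (π/2)))
        simpa using this
      · filter_upwards [self_mem_nhdsWithin] with x hx
        exact ne_of_gt (mul_pos hμ1 (htanpos x hx))
    have harc : Tendsto (fun x : ℝ => Real.arctan (μ * Real.tan (x/2)) / (μ * Real.tan (x/2)))
        (nhdsWithin 0 (Ioo 0 (π/2))) (nhds 1) := tendsto_arctan_div.comp hmt
    have hmain : Tendsto (fun x : ℝ =>
        (Real.arctan (μ * Real.tan (x/2)) / (μ * Real.tan (x/2))) *
          (Real.tan (x/2) / (x/2)) * (μ/2))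
        (nhdsWithin 0 (Ioo 0 (π/2))) (nhds (μ/2)) := by
      have := (harc.mul htan2).mul_const (μ/2)
      simpa using this
    refine hmain.congr' ?_
    filter_upwards [self_mem_nhdsWithin] with x hx
    have hx0 : x ≠ 0 := ne_of_gt hx.1
    have ht := htanpos x hx
    simp only [hQ]
    field_simp
  -- compose with the sequence
  have hφin' : Tendsto (fun k => φ (k + 1)) atTop (nhdsWithin 0 (Ioo 0 (π/2))) :=
    hφin.comp (tendsto_add_atTop_nat 1)
  have hG1 : Tendsto (fun k => G (φ k)) atTop (nhds (1/2)) := hGlim.comp hφin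
  have hG2 : Tendsto (fun k => G (φ (k + 1))) atTop (nhds (1/2)) := hGlim.comp hφin'
  have hQ1 : Tendsto (fun k => Q (φ k)) atTop (nhds (μ/2)) := hQlim.comp hφin
  have hmain : Tendsto (fun k => (G (φ (k+1)) / G (φ k)) * (Q (φ k))^2) atTop
      (nhds (μ^2/4)) := by
    have := (hG2.div hG1 (by norm_num)).mul (hQ1.pow 2)
    have heq : (1/2 : ℝ)/(1/2) * (μ/2)^2 = μ^2/4 := by ring
    rw [heq] at this
    exact this
  refine hmain.congr ?_
  intro k
  -- pointwise identity
  have ha := hmem k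
  have hb := hmem (k+1)
  have ha0 : φ k ≠ 0 := ne_of_gt ha.1
  have hb0 : φ (k+1) ≠ 0 := ne_of_gt hb.1
  have hcospa : 0 < Real.cos (φ k) :=
    Real.cos_pos_of_mem_Ioo ⟨by linarith [ha.1, Real.pi_pos], ha.2⟩
  have hcospb : 0 < Real.cos (φ (k+1)) :=
    Real.cos_pos_of_mem_Ioo ⟨by linarith [hb.1, Real.pi_pos], hb.2⟩
  have hcosa1 : Real.cos (φ k) < 1 := by
    have := Real.cos_lt_cos_of_nonneg_of_le_pi (le_refl 0) (by linarith [ha.2, Real.pi_pos]) ha.1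
    simpa using this
  have hsecpos_a : 0 < 1 / Real.cos (φ k) - 1 := by
    rw [sub_pos, lt_div_iff₀ hcospa]
    linarith
  have hGa : G (φ k) = (1 / Real.cos (φ k) - 1) / (φ k)^2 := rfl
  have hGb : G (φ (k+1)) = (1 / Real.cos (φ (k+1)) - 1) / (φ (k+1))^2 := rfl
  have hQa : Q (φ k) = φ (k+1) / φ k := by
    simp only [hQ]
    rw [← hrec k]
  have hGa0 : G (φ k) ≠ 0 := by
    rw [hGa]
    positivity
  rw [hGa, hGb, hQa]
  have h1 : r * (1 / Real.cos (φ (k+1))) - r = r * (1 / Real.cos (φ (k+1)) - 1) := by ring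
  have h2 : r * (1 / Real.cos (φ k)) - r = r * (1 / Real.cos (φ k) - 1) := by ring
  have hsecb : 0 < 1 / Real.cos (φ (k+1)) - 1 ∨ True := Or.inr trivial
  rw [h1, h2, mul_div_mul_left _ _ (ne_of_gt hr)]
  rw [div_div_div_eq, div_pow, div_mul_div_comm]
  rw [div_eq_div_iff (by positivity) (ne_of_gt hsecpos_a)]
  field_simp
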